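/- Let k be a field and A a commutative k-algebra that is finite-dimensional as a k-vector space. Then A is classically separable over k if and only if there exist n ∈ ℕ and finite separable field extensions K₁, …, Kₙ of k such that A is isomorphic, as a k-algebra, to the product K₁ × ⋯ × Kₙ. -/

import Mathlib

/-!
STATEMENT 4: A finite commutative algebra over a field k is classically separable iff it is
isomorphic to a finite product of finite separable field extensions of k.
-/

open TensorProduct

universe u

/-- A commutative algebra `A` over a field `k` is classically separable if for every field
extension `k ⊆ K` the ring `K ⊗[k] A` has zero Jacobson radical. -/
def ClassicallySeparable (k : Type u) [Field k] (A : Type u) [CommRing A]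
    [Algebra k A] : Prop :=
  ∀ (K : Type u) [Field K] [Algebra k K],
    (⊥ : Ideal (K ⊗[k] A)).jacobson = ⊥

attribute [local instance] Algebra.TensorProduct.rightAlgebra

lemma aux_jac_bot_of_isReduced {A : Type*} [CommRing A] [IsArtinianRing A] [IsReduced A] :
    (⊥ : Ideal A).jacobson = ⊥ := by
  obtain ⟨n, hn⟩ := IsArtinianRing.isNilpotent_jacobson_bot (R := A)
  refine le_antisymm (fun x hx => ?_) bot_le
  have hxn : x ^ n ∈ ((⊥ : Ideal A).jacobson) ^ n := Ideal.pow_mem_pow hx n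
  rw [hn] at hxn
  have : IsNilpotent x := ⟨n, by simpa using hxn⟩
  simpa using this.eq_zero

lemma aux_isReduced_of_jac_bot {A : Type*} [CommRing A]
    (h : (⊥ : Ideal A).jacobson = ⊥) : IsReduced A := by
  constructor
  intro x hx
  have : x ∈ (⊥ : Ideal A).jacobson := Ideal.radical_le_jacobson (mem_nilradical.mpr hx)
  rw [h] at this
  simpa using this

noncomputable def auxDecompEquiv (F A : Type u) [Field F] [CommRing A] [Algebra F A]
    [IsArtinianRing A] [IsReduced A] :
    A ≃ₐ[F] ((I : {I : Ideal A | I.IsMaximal}) → A ⧸ I.1) :=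
  haveI := (IsArtinianRing.setOfPred_isMaximal_finite A).to_subtype
  AlgEquiv.ofRingEquiv (f := (IsArtinianRing.equivPi A).toRingEquiv.trans
    (RingEquiv.piCongrLeft (fun I : {I : Ideal A | I.IsMaximal} => A ⧸ I.1)
      (⟨fun I => ⟨I.asIdeal, I.isMaximal⟩, fun I => ⟨I.1, I.2⟩, fun _ => rfl, fun _ => rfl⟩ :
        MaximalSpectrum A ≃ {I : Ideal A | I.IsMaximal}))) (fun _ => rfl)

theorem stmt_4 (k : Type u) [Field k] (A : Type u) [CommRing A] [Algebra k A]
    [FiniteDimensional k A] :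
    ClassicallySeparable k A ↔
      ∃ (n : ℕ) (K : Fin n → Type u) (fI : ∀ i, Field (K i)),
        letI := fI
        ∃ aI : ∀ i, Algebra k (K i),
          letI := aI
          (∀ i, FiniteDimensional k (K i)) ∧
          (∀ i, Algebra.IsSeparable k (K i)) ∧
          Nonempty (A ≃ₐ[k] ((i : Fin n) → K i)) := by

  constructor
  · intro h
    -- every base change is reduced
    have hredT : ∀ (K : Type u) [Field K] [Algebra k K], IsReduced (K ⊗[k] A) := by
      intro K _ _
      exact aux_isReduced_of_jac_bot (h K)
    haveI : IsReduced A :=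
      isReduced_of_injective (Algebra.TensorProduct.lid k A).symm.toRingHom
        (Algebra.TensorProduct.lid k A).symm.injective
    -- base change to the algebraic closure
    set Kb := AlgebraicClosure k with hKb
    haveI : Module.Finite Kb (Kb ⊗[k] A) := Module.Finite.base_change k Kb A
    haveI : IsArtinianRing (Kb ⊗[k] A) := isArtinian_of_tower Kb inferInstance
    haveI : IsReduced (Kb ⊗[k] A) := hredT Kb
    haveI : Algebra.FormallyUnramified Kb (Kb ⊗[k] A) := by
      haveI := (IsArtinianRing.setOfPred_isMaximal_finite (Kb ⊗[k] A)).to_subtype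
      rw [Algebra.FormallyUnramified.iff_of_equiv (auxDecompEquiv Kb (Kb ⊗[k] A)),
        Algebra.FormallyUnramified.pi_iff]
      intro J
      haveI : J.1.IsMaximal := J.2
      letI : Field ((Kb ⊗[k] A) ⧸ J.1) := Ideal.Quotient.field J.1
      haveI : Module.Finite Kb ((Kb ⊗[k] A) ⧸ J.1) := Module.Finite.quotient _ _
      haveI : Algebra.IsAlgebraic Kb ((Kb ⊗[k] A) ⧸ J.1) := Algebra.IsAlgebraic.of_finite _ _
      exact Algebra.FormallyUnramified.of_isSeparable Kb _
    haveI : Subsingleton (Ω[(Kb ⊗[k] A)⁄Kb]) :=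
      Algebra.FormallyUnramified.subsingleton_kaehlerDifferential
    haveI : Subsingleton (Kb ⊗[k] (Ω[A⁄k])) :=
      (KaehlerDifferential.tensorKaehlerEquivBase k Kb A (Kb ⊗[k] A)).toEquiv.subsingleton
    haveI : Subsingleton (Ω[A⁄k]) :=
      Module.FaithfullyFlat.lTensor_reflects_triviality k Kb _
    haveI : Algebra.FormallyUnramified k A := ⟨this⟩
    -- decompose A
    haveI : IsArtinianRing A := isArtinian_of_tower k inferInstance
    haveI hfin : Finite {I : Ideal A | I.IsMaximal} :=
      (IsArtinianRing.setOfPred_isMaximal_finite A).to_subtype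
    letI : Fintype {I : Ideal A | I.IsMaximal} := Fintype.ofFinite _
    let e0 := Fintype.equivFin {I : Ideal A | I.IsMaximal}
    letI fI' : ∀ i, Field (A ⧸ (e0.symm i).1) := fun i =>
      haveI : ((e0.symm i).1).IsMaximal := (e0.symm i).2
      Ideal.Quotient.field _
    haveI hsep' : ∀ i, Algebra.IsSeparable k (A ⧸ (e0.symm i).1) := fun i =>
      haveI : ((e0.symm i).1).IsMaximal := (e0.symm i).2
      Algebra.FormallyUnramified.isSeparable k _
    exact ⟨Fintype.card {I : Ideal A | I.IsMaximal}, fun i => A ⧸ (e0.symm i).1, fI',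
      fun i => Ideal.Quotient.algebra k, fun i => Module.Finite.quotient _ _, hsep',
      ⟨(auxDecompEquiv k A).trans (AlgEquiv.ofRingEquiv
        (f := RingEquiv.piCongrLeft' (fun I : {I : Ideal A | I.IsMaximal} => A ⧸ I.1) e0)
        (fun _ => rfl))⟩⟩
  · rintro ⟨n, K, fI, aI, hfin, hsep, ⟨e⟩⟩
    intro L _ _
    letI := fI
    letI := aI
    haveI : Module.Finite L (L ⊗[k] A) := Module.Finite.base_change k L A
    haveI : IsArtinianRing (L ⊗[k] A) := isArtinian_of_tower L inferInstance
    haveI : ∀ i, IsReduced (L ⊗[k] K i) := by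
      intro i
      haveI := hfin i
      haveI := hsep i
      haveI : Algebra.FormallyUnramified k (K i) :=
        Algebra.FormallyUnramified.of_isSeparable k (K i)
      haveI : Module.Finite L (L ⊗[k] K i) := Module.Finite.base_change k L (K i)
      exact Algebra.FormallyUnramified.isReduced_of_field L (L ⊗[k] K i)
    let E : (L ⊗[k] A) ≃ₐ[L] ((i : Fin n) → L ⊗[k] K i) :=
      (Algebra.TensorProduct.congr (AlgEquiv.refl (A₁ := L)) e).trans
        (Algebra.TensorProduct.piRight k L L K)
    haveI : IsReduced ((i : Fin n) → L ⊗[k] K i) := by infer_instance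
    haveI : IsReduced (L ⊗[k] A) :=
      isReduced_of_injective E.toRingHom E.injective
    exact aux_jac_bot_of_isReduced
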